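/- Let q be a norm on complex polynomials of one variable satisfying the V. Markov type inequality q(P^{(k)}) ≤ M^k (1/k!)^{m-1} (deg P)^{km} q(P) for all P and all k ≥ 1, with constants M > 0, m ≥ 1. Then for every n ≥ 1 and every r ≥ 0, sup{ sup_{|ζ|≤r} q(P(·+ζ)) : deg P ≤ n, q(P) ≤ 1 } ≤ exp(m M^{1/m} n r^{1/m}); equivalently v_n(q,r) ≤ m M^{1/m} r^{1/m}. -/

import Mathlib

open Polynomial Real

/-- Taylor expansion of `P.comp (X + C ζ)` in terms of Hasse derivatives. -/
lemma taylor_expand_hasse (f : Polynomial ℂ) (ζ : ℂ) (N : ℕ) (h : f.natDegree < N) :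
    f.comp (Polynomial.X + Polynomial.C ζ) =
      ∑ k ∈ Finset.range N, ζ ^ k • Polynomial.hasseDeriv k f := by
  ext i
  rw [← Polynomial.taylor_apply, Polynomial.taylor_coeff,
    Polynomial.eval_eq_sum_range' (lt_of_le_of_lt
      (le_trans (Polynomial.natDegree_hasseDeriv_le f i) (Nat.sub_le _ _)) h),
    Polynomial.finset_sum_coeff]
  refine Finset.sum_congr rfl fun k _ => ?_
  rw [Polynomial.coeff_smul, Polynomial.hasseDeriv_coeff, Polynomial.hasseDeriv_coeff,
    smul_eq_mul]
  rw [add_comm k i, Nat.choose_symm_add]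
  ring

/-- subadditivity of a seminorm over finite sums. -/
lemma q_sum_le {ι : Type*} (q : Polynomial ℂ → ℝ)
    (hq_add : ∀ P Q, q (P + Q) ≤ q P + q Q) (hq0 : q 0 = 0)
    (s : Finset ι) (f : ι → Polynomial ℂ) :
    q (∑ i ∈ s, f i) ≤ ∑ i ∈ s, q (f i) := by
  classical
  induction s using Finset.induction_on with
  | empty => simp [hq0]
  | insert _ _ hx ih =>
    rw [Finset.sum_insert hx, Finset.sum_insert hx]
    exact le_trans (hq_add _ _) (by linarith)

/-- two-term power inequality for `p ≥ 1`. -/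
lemma rpow_two_term {a b p : ℝ} (ha : 0 ≤ a) (hb : 0 ≤ b) (hp : 1 ≤ p) :
    a ^ p + b ^ p ≤ (a + b) ^ p := by
  lift a to NNReal using ha
  lift b to NNReal using hb
  have := NNReal.add_rpow_le_rpow_add a b hp
  exact_mod_cast this

/-- sum power inequality for `p ≥ 1`. -/
lemma sum_rpow_le_rpow_sum {ι : Type*} (s : Finset ι) (f : ι → ℝ)
    (hf : ∀ i ∈ s, 0 ≤ f i) {p : ℝ} (hp : 1 ≤ p) :
    ∑ i ∈ s, f i ^ p ≤ (∑ i ∈ s, f i) ^ p := by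
  classical
  induction s using Finset.induction_on with
  | empty =>
    simp [Real.zero_rpow (by positivity : p ≠ 0)]
  | @insert x t hx ih =>
    have hfx : 0 ≤ f x := hf x (Finset.mem_insert_self _ _)
    have hft : ∀ i ∈ t, 0 ≤ f i := fun i hi => hf i (Finset.mem_insert_of_mem hi)
    have hts : 0 ≤ ∑ i ∈ t, f i := Finset.sum_nonneg hft
    rw [Finset.sum_insert hx, Finset.sum_insert hx]
    calc f x ^ p + ∑ i ∈ t, f i ^ p ≤ f x ^ p + (∑ i ∈ t, f i) ^ p := by
          linarith [ih hft]
      _ ≤ (f x + ∑ i ∈ t, f i) ^ p := rpow_two_term hfx hts hp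

/-- if a norm `q` on complex polynomials satisfies the V. Markov type
inequality `q(P^{(k)}) ≤ M^k (1/k!)^{m-1} (deg P)^{km} q(P)` for all `k ≥ 1`, then
`sup{ q(P(·+ζ)) : |ζ| ≤ r, deg P ≤ n, q(P) ≤ 1 } ≤ exp(m M^{1/m} n r^{1/m})`. -/
theorem stmt3 (q : Polynomial ℂ → ℝ)
    (hq_add : ∀ P Q, q (P + Q) ≤ q P + q Q)
    (hq_smul : ∀ (c : ℂ) P, q (c • P) = ‖c‖ * q P)
    (hq_eq : ∀ P, q P = 0 ↔ P = 0)
    (M m : ℝ) (hM : 0 < M) (hm : 1 ≤ m)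
    (hVMarkov : ∀ (P : Polynomial ℂ) (k : ℕ), 1 ≤ k →
      q ((Polynomial.derivative)^[k] P) ≤
        M ^ k * ((1 : ℝ) / (Nat.factorial k : ℝ)) ^ (m - 1) *
          ((P.natDegree : ℝ)) ^ ((k : ℝ) * m) * q P)
    (n : ℕ) (hn : 1 ≤ n) (r : ℝ) (hr : 0 ≤ r) :
    sSup {x : ℝ | ∃ (P : Polynomial ℂ) (ζ : ℂ),
        P.natDegree ≤ n ∧ q P ≤ 1 ∧ ‖ζ‖ ≤ r ∧
        x = q (P.comp (Polynomial.X + Polynomial.C ζ))}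
      ≤ Real.exp (m * M ^ ((1 : ℝ) / m) * (n : ℝ) * r ^ ((1 : ℝ) / m)) := by
  have hm0 : (0 : ℝ) < m := lt_of_lt_of_le zero_lt_one hm
  -- basic facts about q
  have hq0 : q 0 = 0 := by
    have := hq_smul 0 0
    simpa using this
  have hq_nonneg : ∀ P, 0 ≤ q P := by
    intro P
    have h1 : q ((-1 : ℂ) • P) = q P := by rw [hq_smul]; simp
    have h2 : q (P + (-1 : ℂ) • P) ≤ q P + q ((-1 : ℂ) • P) := hq_add _ _
    have h3 : P + (-1 : ℂ) • P = 0 := by simp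
    rw [h3, hq0, h1] at h2
    linarith
  apply Real.sSup_le _ (Real.exp_nonneg _)
  rintro x ⟨P, ζ, hdeg, hqP, hζ, rfl⟩
  -- the key quantities
  set x₀ : ℝ := M * r * (n : ℝ) ^ (m : ℝ) with hx₀def
  have hx₀ : 0 ≤ x₀ := by positivity
  set y : ℝ := x₀ ^ ((1 : ℝ) / m) with hydef
  have hy : 0 ≤ y := Real.rpow_nonneg hx₀ _
  have hym : y ^ (m : ℝ) = x₀ := by
    rw [hydef, ← Real.rpow_mul hx₀, one_div, inv_mul_cancel₀ (ne_of_gt hm0), Real.rpow_one]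
  -- Taylor expansion
  have hexp := taylor_expand_hasse P ζ (n + 1) (Nat.lt_succ_of_le hdeg)
  rw [hexp]
  -- termwise bound
  have key : ∀ k ∈ Finset.range (n + 1),
      q (ζ ^ k • Polynomial.hasseDeriv k P) ≤ (y ^ k / (Nat.factorial k : ℝ)) ^ (m : ℝ) := by
    intro k _
    have hfac : (0 : ℝ) < (Nat.factorial k : ℝ) := by exact_mod_cast Nat.factorial_pos k
    -- q of hasseDeriv in terms of iterated derivative
    have hhd : (Nat.factorial k : ℝ) * q (Polynomial.hasseDeriv k P) =
        q ((Polynomial.derivative)^[k] P) := by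
      have h1 : (Polynomial.derivative)^[k] P =
          ((Nat.factorial k : ℂ)) • Polynomial.hasseDeriv k P := by
        have := congrFun (Polynomial.factorial_smul_hasseDeriv (R := ℂ) k) P
        rw [← this]
        simp [Nat.cast_smul_eq_nsmul]
      rw [h1, hq_smul]
      simp
    have hsm : q (ζ ^ k • Polynomial.hasseDeriv k P) = ‖ζ‖ ^ k * q (Polynomial.hasseDeriv k P) := by
      rw [hq_smul, norm_pow]
    -- target value rewriting
    have htarget : (y ^ k / (Nat.factorial k : ℝ)) ^ (m : ℝ) =
        M ^ k * r ^ k * ((n : ℝ) ^ (m : ℝ)) ^ k * ((1 : ℝ) / (Nat.factorial k : ℝ)) ^ (m : ℝ) := by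
      rw [div_eq_mul_one_div, Real.mul_rpow (by positivity) (by positivity)]
      congr 1
      rw [← Real.rpow_natCast y k, ← Real.rpow_mul hy, mul_comm (k : ℝ) m,
        Real.rpow_mul hy, hym, hx₀def]
      rw [Real.rpow_natCast]
      ring
    rcases Nat.eq_zero_or_pos k with hk0 | hkpos
    · subst hk0
      simp only [pow_zero, one_smul, Nat.factorial_zero, Nat.cast_one, div_one,
        Real.one_rpow] at *
      simpa using hqP
    · -- k ≥ 1 case
      have hVM := hVMarkov P k hkpos
      have hdegpow : ((P.natDegree : ℝ)) ^ ((k : ℝ) * m) ≤ ((n : ℝ)) ^ ((k : ℝ) * m) := by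
        apply Real.rpow_le_rpow (by positivity) (by exact_mod_cast hdeg) (by positivity)
      have hq_hd : q (Polynomial.hasseDeriv k P) =
          q ((Polynomial.derivative)^[k] P) / (Nat.factorial k : ℝ) := by
        field_simp [← hhd]
        rw [← hhd]; ring
      rw [hsm, hq_hd, htarget]
      have hstep1 : q ((Polynomial.derivative)^[k] P) ≤
          M ^ k * ((1 : ℝ) / (Nat.factorial k : ℝ)) ^ (m - 1) * ((n : ℝ)) ^ ((k : ℝ) * m) := by
        calc q ((Polynomial.derivative)^[k] P)
            ≤ M ^ k * ((1 : ℝ) / (Nat.factorial k : ℝ)) ^ (m - 1) *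
              ((P.natDegree : ℝ)) ^ ((k : ℝ) * m) * q P := hVM
          _ ≤ M ^ k * ((1 : ℝ) / (Nat.factorial k : ℝ)) ^ (m - 1) *
              ((n : ℝ)) ^ ((k : ℝ) * m) * 1 := by
              apply mul_le_mul _ hqP (hq_nonneg _) (by positivity)
              apply mul_le_mul_of_nonneg_left hdegpow (by positivity)
          _ = M ^ k * ((1 : ℝ) / (Nat.factorial k : ℝ)) ^ (m - 1) *
              ((n : ℝ)) ^ ((k : ℝ) * m) := mul_one _
      have hζk : ‖ζ‖ ^ k ≤ r ^ k := pow_le_pow_left₀ (norm_nonneg _) hζ k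
      have hfacm : ((1 : ℝ) / (Nat.factorial k : ℝ)) ^ (m - 1) * (1 / (Nat.factorial k : ℝ)) =
          ((1 : ℝ) / (Nat.factorial k : ℝ)) ^ (m : ℝ) := by
        nth_rewrite 2 [← Real.rpow_one ((1 : ℝ) / (Nat.factorial k : ℝ))]
        rw [← Real.rpow_add (by positivity)]
        ring_nf
      have hnkm : ((n : ℝ)) ^ ((k : ℝ) * m) = ((n : ℝ) ^ (m : ℝ)) ^ k := by
        rw [mul_comm, Real.rpow_mul_natCast (by positivity)]
      calc ‖ζ‖ ^ k * (q ((Polynomial.derivative)^[k] P) / (Nat.factorial k : ℝ))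
          ≤ r ^ k * (q ((Polynomial.derivative)^[k] P) / (Nat.factorial k : ℝ)) := by
            exact mul_le_mul_of_nonneg_right hζk
              (div_nonneg (hq_nonneg _) (le_of_lt hfac))
        _ ≤ r ^ k * ((M ^ k * ((1 : ℝ) / (Nat.factorial k : ℝ)) ^ (m - 1) *
              ((n : ℝ)) ^ ((k : ℝ) * m)) / (Nat.factorial k : ℝ)) := by
            apply mul_le_mul_of_nonneg_left _ (by positivity)
            exact div_le_div_of_nonneg_right hstep1 hfac.le
        _ = M ^ k * r ^ k * ((n : ℝ) ^ (m : ℝ)) ^ k *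
              (((1 : ℝ) / (Nat.factorial k : ℝ)) ^ (m - 1) * (1 / (Nat.factorial k : ℝ))) := by
            rw [hnkm]; ring
        _ = M ^ k * r ^ k * ((n : ℝ) ^ (m : ℝ)) ^ k *
              ((1 : ℝ) / (Nat.factorial k : ℝ)) ^ (m : ℝ) := by rw [hfacm]
  -- put it together
  have hsum1 : q (∑ k ∈ Finset.range (n + 1), ζ ^ k • Polynomial.hasseDeriv k P)
      ≤ ∑ k ∈ Finset.range (n + 1), (y ^ k / (Nat.factorial k : ℝ)) ^ (m : ℝ) := by
    refine le_trans (q_sum_le q hq_add hq0 _ _) ?_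
    exact Finset.sum_le_sum key
  have hsum2 : ∑ k ∈ Finset.range (n + 1), (y ^ k / (Nat.factorial k : ℝ)) ^ (m : ℝ)
      ≤ (∑ k ∈ Finset.range (n + 1), y ^ k / (Nat.factorial k : ℝ)) ^ (m : ℝ) := by
    apply sum_rpow_le_rpow_sum _ _ (fun k _ => by positivity) hm
  have hsum3 : (∑ k ∈ Finset.range (n + 1), y ^ k / (Nat.factorial k : ℝ)) ^ (m : ℝ)
      ≤ (Real.exp y) ^ (m : ℝ) := by
    apply Real.rpow_le_rpow (Finset.sum_nonneg fun k _ => by positivity)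
      (Real.sum_le_exp_of_nonneg hy _) (le_of_lt hm0)
  have hexpm : (Real.exp y) ^ (m : ℝ) = Real.exp (y * m) := (Real.exp_mul y m).symm
  have hyval : y * m = m * M ^ ((1 : ℝ) / m) * (n : ℝ) * r ^ ((1 : ℝ) / m) := by
    have : y = M ^ ((1 : ℝ) / m) * r ^ ((1 : ℝ) / m) * (n : ℝ) := by
      rw [hydef, hx₀def, Real.mul_rpow (by positivity) (by positivity),
        Real.mul_rpow (le_of_lt hM) hr, ← Real.rpow_mul (by positivity),
        mul_one_div, div_self (ne_of_gt hm0), Real.rpow_one]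
    rw [this]; ring
  calc q (∑ k ∈ Finset.range (n + 1), ζ ^ k • Polynomial.hasseDeriv k P)
      ≤ (Real.exp y) ^ (m : ℝ) := le_trans hsum1 (le_trans hsum2 hsum3)
    _ = Real.exp (m * M ^ ((1 : ℝ) / m) * (n : ℝ) * r ^ ((1 : ℝ) / m)) := by
        rw [hexpm, hyval]
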